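/- Let X, A, W, Y be Borel subsets of Polish spaces with X = Y × W, and let P(dx'|x,a) be a stochastic kernel on X given X × A. Suppose the topology on W has a countable base τ_b^W containing W such that for each finite intersection O of base elements from τ_b^W, the family of functions {(x,a) ↦ P(C × O | x, a) : C open in Y} is equicontinuous at every point (x,a) ∈ X × A. Then the stochastic kernel R on X × Y given P(X) × A defined by R(B × C | z, a) := ∫_X [∫_B I{F(x') ∈ C} P(dx'|x,a)] z(dx), where F(y,w) = y, has the property that for every pair of open base sets O_Y ⊆ Y, O_W ⊆ W the family {(z,a) ↦ R((O_Y × O_W) × C | z, a) : C open in Y} is equicontinuous at all points (z,a) ∈ P(X) × A. -/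

import Mathlib

open MeasureTheory Filter Topology

section Aux
open Metric Set

private lemma frontier_partialSups_subset {X : Type*} [TopologicalSpace X] (f : ℕ → Set X)
    (n : ℕ) : frontier (partialSups f n : Set X) ⊆ ⋃ k, ⋃ _ : k ≤ n, frontier (f k) := by
  induction n with
  | zero =>
    simp only [partialSups_zero]
    exact subset_iUnion₂ (s := fun k (_ : k ≤ 0) => frontier (f k)) 0 le_rfl
  | succ n ih =>
    rw [partialSups_add_one]
    have hsup : ((partialSups f n ⊔ f (n + 1) : Set X)) = (partialSups f n : Set X) ∪ f (n + 1) :=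
      rfl
    rw [hsup]
    intro x hx
    rcases frontier_union_subset _ _ hx with hx1 | hx1
    · exact iUnion₂_mono' (fun k hk => ⟨k, hk.trans (Nat.le_succ n), subset_rfl⟩) (ih hx1.1)
    · exact mem_iUnion₂.2 ⟨n + 1, le_rfl, hx1.2⟩

private lemma frontier_disjointed_subset {X : Type*} [TopologicalSpace X] (f : ℕ → Set X)
    (n : ℕ) : frontier (disjointed f n) ⊆ ⋃ k, ⋃ _ : k ≤ n, frontier (f k) := by
  cases n with
  | zero =>
    simp only [disjointed_zero]
    exact subset_iUnion₂ (s := fun k (_ : k ≤ 0) => frontier (f k)) 0 le_rfl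
  | succ n =>
    rw [disjointed_add_one, Set.diff_eq]
    intro x hx
    rcases frontier_inter_subset _ _ hx with hx1 | hx1
    · exact mem_iUnion₂.2 ⟨n + 1, le_rfl, hx1.1⟩
    · have hx2 : x ∈ frontier (partialSups f n : Set X) := by
        rw [← frontier_compl]; exact hx1.2
      exact iUnion₂_mono' (fun k hk => ⟨k, hk.trans (Nat.le_succ n), subset_rfl⟩)
        (frontier_partialSups_subset f n hx2)

private theorem unif_conv {X A : Type*} [MetricSpace X] [SecondCountableTopology X]
    [MeasurableSpace X] [BorelSpace X] [MetricSpace A] {ι : Type*} (f : ι → A → X → ℝ)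
    (hmeas : ∀ i b, Measurable (f i b))
    (hf0 : ∀ i b x, 0 ≤ f i b x) (hf1 : ∀ i b x, f i b x ≤ 1)
    (z : ProbabilityMeasure X) (a : A) (ε : ℝ) (hε : 0 < ε)
    (hEq : ∀ x : X, ∃ δ > 0, ∀ x' b, dist x' x < δ → dist b a < δ →
      ∀ i, |f i b x' - f i a x| ≤ ε) :
    ∀ᶠ q : ProbabilityMeasure X × A in 𝓝 (z, a),
      ∀ i, |(∫ x, f i q.2 x ∂(q.1 : Measure X)) - ∫ x, f i a x ∂(z : Measure X)| ≤ 6 * ε := by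
  obtain ⟨x₀⟩ : Nonempty X := z.nonempty
  choose δ hδpos hδ using hEq
  have hrex : ∀ x : X, ∃ rr ∈ Set.Ioo (0 : ℝ) (δ x),
      (z : Measure X) (frontier (ball x rr)) = 0 := by
    intro x
    obtain ⟨rr, hrr, hfr⟩ := exists_null_frontier_thickening (z : Measure X) {x} (hδpos x)
    exact ⟨rr, hrr, by rwa [Metric.thickening_singleton] at hfr⟩
  choose r hrIoo hrnull using hrex
  set B : X → Set X := fun x => ball x (r x) with hBdef
  obtain ⟨T, hTc, hTU⟩ := TopologicalSpace.isOpen_iUnion_countable B (fun x => isOpen_ball)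
  have hcover : ⋃ x, B x = Set.univ :=
    Set.eq_univ_of_forall fun y => Set.mem_iUnion.2 ⟨y, mem_ball_self (hrIoo y).1⟩
  have hTne : T.Nonempty := by
    rcases Set.eq_empty_or_nonempty T with h | h
    · rw [h] at hTU
      simp only [Set.mem_empty_iff_false, Set.iUnion_of_empty, Set.iUnion_empty] at hTU
      rw [hcover] at hTU
      exact absurd (hTU ▸ Set.mem_univ x₀ : x₀ ∈ (∅ : Set X)) (Set.notMem_empty x₀)
    · exact h
  obtain ⟨u, hu⟩ := hTc.exists_eq_range hTne
  set F : ℕ → Set X := fun n => B (u n) with hFdef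
  have hFcover : ⋃ n, F n = Set.univ := by
    rw [← hcover, ← hTU, hu]
    exact (Set.biUnion_range (f := u) (g := B)).symm
  have hlim : Tendsto (fun n => ((z : Measure X) (partialSups F n : Set X)).toReal) atTop
      (𝓝 1) := by
    have h1 : Tendsto (fun n => (z : Measure X) (partialSups F n : Set X)) atTop
        (𝓝 ((z : Measure X) (⋃ n, (partialSups F n : Set X)))) :=
      tendsto_measure_iUnion_atTop (fun n m hnm => (partialSups F).monotone hnm)
    have h2 : (⋃ n, (partialSups F n : Set X)) = Set.univ := by
      apply Set.eq_univ_of_univ_subset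
      rw [← hFcover]
      exact Set.iUnion_mono fun n => le_partialSups F n
    rw [h2, measure_univ] at h1
    have h3 := (ENNReal.tendsto_toReal ENNReal.one_ne_top).comp h1
    simpa [Function.comp_def] using h3
  obtain ⟨N, hNz⟩ := (hlim.eventually (lt_mem_nhds (show 1 - ε < (1 : ℝ) by linarith))).exists
  set U : Set X := (partialSups F N : Set X) with hUdef
  set An : ℕ → Set X := disjointed F with hAndef
  have hFmeas : ∀ n, MeasurableSet (F n) := fun n => isOpen_ball.measurableSet
  have hAnmeas : ∀ n, MeasurableSet (An n) := fun n => MeasurableSet.disjointed hFmeas n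
  have hUeq : U = ⋃ k, ⋃ _ : k ≤ N, F k := by
    rw [hUdef, partialSups_eq_biSup]
    simp only [Set.iSup_eq_iUnion]
  have hUopen : IsOpen U := by
    rw [hUeq]; exact isOpen_iUnion fun k => isOpen_iUnion fun _ => isOpen_ball
  have hUA : U = ⋃ k, ⋃ _ : k ≤ N, An k := by
    rw [hUdef, ← partialSups_disjointed, partialSups_eq_biSup]
    simp only [Set.iSup_eq_iUnion]
    rfl
  have hAnsub : ∀ n, An n ⊆ F n := fun n => disjointed_subset F n
  have hAnU : ∀ n, n ≤ N → An n ⊆ U := fun n hn =>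
    (hAnsub n).trans (by rw [hUeq]; exact Set.subset_iUnion₂ (s := fun k (_ : k ≤ N) => F k) n hn)
  have hZ : (z : Measure X) (⋃ k, ⋃ _ : k ≤ N, frontier (F k)) = 0 :=
    measure_iUnion_null fun k => measure_iUnion_null fun _ => hrnull (u k)
  have hAnull : ∀ n, n ≤ N → (z : Measure X) (frontier (An n)) = 0 := by
    intro n hn
    refine measure_mono_null ((frontier_disjointed_subset F n).trans ?_) hZ
    exact iUnion₂_mono' fun k hk => ⟨k, hk.trans hn, subset_rfl⟩
  have hUnull : (z : Measure X) (frontier U) = 0 :=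
    measure_mono_null (frontier_partialSups_subset F N) hZ
  set ρ : ProbabilityMeasure X → Set X → ℝ := fun m E => ((m : Measure X) E).toReal with hρdef
  have port : ∀ E : Set X, (z : Measure X) (frontier E) = 0 →
      Tendsto (fun q : ProbabilityMeasure X × A => ρ q.1 E) (𝓝 (z, a)) (𝓝 (ρ z E)) := by
    intro E hE0
    have h := ProbabilityMeasure.tendsto_measure_of_null_frontier_of_tendsto'
      (continuous_fst.tendsto (z, a)) hE0
    exact (ENNReal.tendsto_toReal (measure_ne_top _ E)).comp h
  have hNz' : 1 - ε < ρ z U := hNz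
  obtain ⟨dm, hdm0, hdmle⟩ : ∃ dm > 0, ∀ n ≤ N, dm ≤ δ (u n) := by
    refine ⟨(Finset.range (N + 1)).inf' ⟨0, by simp⟩ (fun n => δ (u n)), ?_, ?_⟩
    · exact (Finset.lt_inf'_iff _).mpr fun n _ => hδpos (u n)
    · intro n hn
      exact Finset.inf'_le _ (Finset.mem_range.mpr (Nat.lt_succ_of_le hn))
  have hev1 : ∀ᶠ q : ProbabilityMeasure X × A in 𝓝 (z, a), dist q.2 a < dm := by
    have hb : ∀ᶠ b in 𝓝 a, dist b a < dm := by
      filter_upwards [Metric.ball_mem_nhds a hdm0] with b hb using mem_ball.mp hb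
    exact (continuous_snd.tendsto (z, a)).eventually hb
  have hev2 : ∀ᶠ q : ProbabilityMeasure X × A in 𝓝 (z, a),
      ∀ n ∈ Finset.range (N + 1), |ρ q.1 (An n) - ρ z (An n)| ≤ ε / (N + 1) := by
    rw [eventually_all_finset]
    intro n hn
    have hp := port (An n) (hAnull n (Nat.lt_succ_iff.mp (Finset.mem_range.mp hn)))
    have hdist := Metric.tendsto_nhds.mp hp (ε / (N + 1)) (by positivity)
    filter_upwards [hdist] with q hq
    rw [Real.dist_eq] at hq
    exact hq.le
  have hev3 : ∀ᶠ q : ProbabilityMeasure X × A in 𝓝 (z, a), 1 - 2 * ε < ρ q.1 U := by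
    have hp := port U hUnull
    have hdist := Metric.tendsto_nhds.mp hp ε hε
    filter_upwards [hdist] with q hq
    rw [Real.dist_eq, abs_lt] at hq
    linarith [hq.1]
  filter_upwards [hev1, hev2, hev3] with q hq1 hq2 hq3
  intro i
  have hcompl : ∀ m : ProbabilityMeasure X, ρ m U + ρ m Uᶜ = 1 := by
    intro m
    have h := measure_add_measure_compl (μ := (m : Measure X)) hUopen.measurableSet
    rw [measure_univ] at h
    have h1 : ((m : Measure X) U).toReal + ((m : Measure X) Uᶜ).toReal
        = ((1 : ENNReal)).toReal := by
      rw [← ENNReal.toReal_add (measure_ne_top _ _) (measure_ne_top _ _), h]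
    simpa [hρdef] using h1
  have hρ'Uc : ρ q.1 Uᶜ ≤ 2 * ε := by have := hcompl q.1; linarith
  have hρzUc : ρ z Uᶜ ≤ ε := by have := hcompl z; linarith [hNz']
  have hintf : ∀ (b : A) (m : ProbabilityMeasure X), Integrable (f i b) (m : Measure X) := by
    intro b m
    refine Integrable.mono' (integrable_const (1 : ℝ)) (hmeas i b).aestronglyMeasurable ?_
    exact ae_of_all _ fun x => by
      rw [Real.norm_eq_abs, abs_of_nonneg (hf0 i b x)]; exact hf1 i b x
  set c : ℕ → ℝ := fun n => f i a (u n) with hcdef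
  set g : X → ℝ := fun x => ∑ n ∈ Finset.range (N + 1), Set.indicator (An n) (fun _ => c n) x
    with hgdef
  have hintg : ∀ m : ProbabilityMeasure X, Integrable g (m : Measure X) := fun m =>
    integrable_finset_sum _ fun n _ => (integrable_const (c n)).indicator (hAnmeas n)
  have hintind : ∀ m : ProbabilityMeasure X,
      Integrable (Set.indicator Uᶜ fun _ => (1 : ℝ)) (m : Measure X) :=
    fun m => (integrable_const 1).indicator hUopen.measurableSet.compl
  have hpt : ∀ b : A, dist b a < dm →
      ∀ x, |f i b x - g x| ≤ ε + Set.indicator Uᶜ (fun _ => (1 : ℝ)) x := by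
    intro b hb x
    by_cases hx : x ∈ U
    · obtain ⟨n, hn, hxn⟩ : ∃ n, n ≤ N ∧ x ∈ An n := by
        rw [hUA] at hx
        simpa using hx
      have hgx : g x = c n := by
        calc g x = Set.indicator (An n) (fun _ => c n) x := by
              refine Finset.sum_eq_single_of_mem n
                (Finset.mem_range.mpr (Nat.lt_succ_of_le hn)) ?_
              intro m hm hmn
              exact Set.indicator_of_notMem
                (fun hxm => (Set.disjoint_left.mp (disjoint_disjointed F hmn) hxm) hxn) _
          _ = c n := Set.indicator_of_mem hxn _
      have hxb : dist x (u n) < δ (u n) := lt_trans (mem_ball.mp (hAnsub n hxn)) (hrIoo (u n)).2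
      have hba : dist b a < δ (u n) := lt_of_lt_of_le hb (hdmle n hn)
      have hkey := hδ (u n) x b hxb hba i
      have hind0 : Set.indicator Uᶜ (fun _ => (1 : ℝ)) x = 0 :=
        Set.indicator_of_notMem (Set.notMem_compl_iff.mpr hx) _
      rw [hgx, hind0, add_zero]
      exact hkey
    · have hgx : g x = 0 := by
        refine Finset.sum_eq_zero fun n hn => Set.indicator_of_notMem
          (fun hxA => hx (hAnU n (Nat.lt_succ_iff.mp (Finset.mem_range.mp hn)) hxA)) _
      have hind1 : Set.indicator Uᶜ (fun _ => (1 : ℝ)) x = 1 := Set.indicator_of_mem (Set.mem_compl hx) _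
      rw [hgx, hind1, sub_zero, abs_of_nonneg (hf0 i b x)]
      linarith [hf1 i b x]
  have hρint : ∀ m : ProbabilityMeasure X, (∫ x, g x ∂(m : Measure X))
      = ∑ n ∈ Finset.range (N + 1), c n * ρ m (An n) := by
    intro m
    rw [show (∫ x, g x ∂(m : Measure X)) = ∫ x, (∑ n ∈ Finset.range (N + 1),
        Set.indicator (An n) (fun _ => c n) x) ∂(m : Measure X) from rfl,
      integral_finset_sum _ fun n _ => (integrable_const (c n)).indicator (hAnmeas n)]
    refine Finset.sum_congr rfl fun n _ => ?_
    rw [integral_indicator_const (c n) (hAnmeas n)]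
    simp [hρdef, smul_eq_mul, mul_comm]
    exact Or.inl rfl
  have hmain : ∀ b : A, dist b a < dm → ∀ m : ProbabilityMeasure X,
      |(∫ x, f i b x ∂(m : Measure X)) - ∑ n ∈ Finset.range (N + 1), c n * ρ m (An n)|
        ≤ ε + ρ m Uᶜ := by
    intro b hb m
    rw [← hρint m, ← integral_sub (hintf b m) (hintg m)]
    calc |∫ x, (f i b x - g x) ∂(m : Measure X)|
        ≤ ∫ x, |f i b x - g x| ∂(m : Measure X) := by
          simpa [Real.norm_eq_abs] using
            norm_integral_le_integral_norm (μ := (m : Measure X)) (fun x => f i b x - g x)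
      _ ≤ ∫ x, (ε + Set.indicator Uᶜ (fun _ => (1 : ℝ)) x) ∂(m : Measure X) := by
          refine integral_mono ((hintf b m).sub (hintg m)).abs
            ((integrable_const ε).add (hintind m)) ?_
          intro x
          exact hpt b hb x
      _ = ε + ρ m Uᶜ := by
          rw [integral_add (integrable_const ε) (hintind m), integral_const,
            integral_indicator_const (1 : ℝ) hUopen.measurableSet.compl]
          simp [hρdef]
          rfl
  have t1 := hmain q.2 hq1 q.1
  have t2 := hmain a (by simpa using hdm0) z
  have hsum : |∑ n ∈ Finset.range (N + 1), c n * ρ q.1 (An n)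
      - ∑ n ∈ Finset.range (N + 1), c n * ρ z (An n)| ≤ ε := by
    rw [← Finset.sum_sub_distrib]
    calc |∑ n ∈ Finset.range (N + 1), (c n * ρ q.1 (An n) - c n * ρ z (An n))|
        ≤ ∑ n ∈ Finset.range (N + 1), |c n * ρ q.1 (An n) - c n * ρ z (An n)| :=
          Finset.abs_sum_le_sum_abs _ _
      _ ≤ ∑ _n ∈ Finset.range (N + 1), ε / (N + 1) := by
          refine Finset.sum_le_sum fun n hn => ?_
          rw [← mul_sub, abs_mul]
          have hc1 : |c n| ≤ 1 := by
            rw [hcdef, abs_of_nonneg (hf0 i a (u n))]; exact hf1 i a (u n)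
          calc |c n| * |ρ q.1 (An n) - ρ z (An n)| ≤ 1 * (ε / (N + 1)) :=
                mul_le_mul hc1 (hq2 n hn) (abs_nonneg _) one_pos.le
            _ = ε / (N + 1) := one_mul _
      _ = ε := by
          rw [Finset.sum_const, Finset.card_range, nsmul_eq_mul, Nat.cast_add_one]
          field_simp
  have habs1 := abs_sub_le (∫ x, f i q.2 x ∂(q.1 : Measure X))
    (∑ n ∈ Finset.range (N + 1), c n * ρ q.1 (An n)) (∫ x, f i a x ∂(z : Measure X))
  have habs2 := abs_sub_le (∑ n ∈ Finset.range (N + 1), c n * ρ q.1 (An n))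
    (∑ n ∈ Finset.range (N + 1), c n * ρ z (An n)) (∫ x, f i a x ∂(z : Measure X))
  have habs3 : |∑ n ∈ Finset.range (N + 1), c n * ρ z (An n) - ∫ x, f i a x ∂(z : Measure X)|
      = |(∫ x, f i a x ∂(z : Measure X)) - ∑ n ∈ Finset.range (N + 1), c n * ρ z (An n)| :=
    abs_sub_comm _ _
  linarith

end Aux


theorem stmt19 {Y W A : Type*}
    [MetricSpace Y] [SecondCountableTopology Y] [MeasurableSpace Y] [BorelSpace Y]
    [MetricSpace W] [SecondCountableTopology W] [MeasurableSpace W] [BorelSpace W]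
    [MetricSpace A] [SecondCountableTopology A] [MeasurableSpace A] [BorelSpace A]
    (P : Y × W → A → Measure (Y × W))
    (hPm : Measurable (Function.uncurry P))
    (hPprob : ∀ x a, IsProbabilityMeasure (P x a))
    (τbY : Set (Set Y)) (hYc : τbY.Countable)
    (hYb : TopologicalSpace.IsTopologicalBasis τbY)
    (τbW : Set (Set W)) (hWc : τbW.Countable)
    (hWb : TopologicalSpace.IsTopologicalBasis τbW) (hWuniv : Set.univ ∈ τbW)
    (heq : ∀ (N : ℕ) (O : Fin (N + 1) → Set W), (∀ j, O j ∈ τbW) →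
      ∀ (x : Y × W) (a : A),
        Tendsto (fun p : (Y × W) × A =>
            ⨆ (C : Set Y) (_ : IsOpen C),
              |(P p.1 p.2 (C ×ˢ ⋂ j, O j)).toReal -
               (P x a (C ×ˢ ⋂ j, O j)).toReal|)
          (𝓝 (x, a)) (𝓝 0)) :
    ∀ OY ∈ τbY, ∀ OW ∈ τbW,
      ∀ (z : ProbabilityMeasure (Y × W)) (a : A),
        Tendsto (fun q : ProbabilityMeasure (Y × W) × A =>
            ⨆ (C : Set Y) (_ : IsOpen C),
              |(∫⁻ x, P x q.2 ((OY ∩ C) ×ˢ OW) ∂(q.1 : Measure (Y × W))).toReal -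
               (∫⁻ x, P x a ((OY ∩ C) ×ˢ OW) ∂(z : Measure (Y × W))).toReal|)
          (𝓝 (z, a)) (𝓝 0) := by
  intro OY hOY OW hOW z a
  have hOYo : IsOpen OY := hYb.isOpen hOY
  have hOWo : IsOpen OW := hWb.isOpen hOW
  have htoReal01 : ∀ (x : Y × W) (b : A) (S : Set (Y × W)),
      0 ≤ (P x b S).toReal ∧ (P x b S).toReal ≤ 1 := by
    intro x b S
    haveI := hPprob x b
    refine ⟨ENNReal.toReal_nonneg, ?_⟩
    calc (P x b S).toReal ≤ (P x b Set.univ).toReal :=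
          ENNReal.toReal_mono (measure_ne_top _ _) (measure_mono (Set.subset_univ S))
      _ = 1 := by rw [measure_univ, ENNReal.toReal_one]
  have hmeas' : ∀ (C : {C : Set Y // IsOpen C}) (b : A),
      Measurable fun x : Y × W => (P x b ((OY ∩ C.1) ×ˢ OW)).toReal := by
    intro C b
    have hS : MeasurableSet ((OY ∩ C.1) ×ˢ OW) :=
      (hOYo.inter C.2).measurableSet.prod hOWo.measurableSet
    exact ((Measure.measurable_coe hS).comp
      (hPm.comp (measurable_id.prodMk measurable_const))).ennreal_toReal
  have hconv : ∀ (b : A) (m : ProbabilityMeasure (Y × W)) (C : Set Y), IsOpen C →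
      (∫⁻ x, P x b ((OY ∩ C) ×ˢ OW) ∂(m : Measure (Y × W))).toReal
        = ∫ x, (P x b ((OY ∩ C) ×ˢ OW)).toReal ∂(m : Measure (Y × W)) := by
    intro b m C hC
    have hS : MeasurableSet ((OY ∩ C) ×ˢ OW) :=
      (hOYo.inter hC).measurableSet.prod hOWo.measurableSet
    refine (integral_toReal ?_ ?_).symm
    · exact ((Measure.measurable_coe hS).comp
        (hPm.comp (measurable_id.prodMk measurable_const))).aemeasurable
    · refine ae_of_all _ fun x => ?_
      haveI := hPprob x b
      exact measure_lt_top _ _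
  rw [Metric.tendsto_nhds]
  intro ε hε
  have h7 : 0 < ε / 7 := by linarith
  have hEall : ∀ x : Y × W, ∃ δ > 0, ∀ x' b, dist x' x < δ → dist b a < δ →
      ∀ C : {C : Set Y // IsOpen C},
        |(P x' b ((OY ∩ C.1) ×ˢ OW)).toReal - (P x a ((OY ∩ C.1) ×ˢ OW)).toReal| ≤ ε / 7 := by
    intro x
    have h := heq 0 (fun _ => OW) (fun _ => hOW) x a
    simp only [Set.iInter_const] at h
    have h2 := Metric.tendsto_nhds.mp h (ε / 7) h7
    rw [Metric.eventually_nhds_iff] at h2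
    obtain ⟨δ', hδ'0, hδ'⟩ := h2
    refine ⟨δ', hδ'0, fun x' b hx' hb C => ?_⟩
    have hp : dist ((x', b) : (Y × W) × A) (x, a) < δ' := by
      rw [Prod.dist_eq]; exact max_lt hx' hb
    have hsup : (⨆ (C' : Set Y) (_ : IsOpen C'),
        |(P x' b (C' ×ˢ OW)).toReal - (P x a (C' ×ˢ OW)).toReal|) < ε / 7 := by
      have h3 := hδ' hp
      rw [Real.dist_eq, sub_zero] at h3
      exact lt_of_abs_lt h3
    have hbdd : BddAbove (Set.range fun C' : Set Y =>
        ⨆ _ : IsOpen C', |(P x' b (C' ×ˢ OW)).toReal - (P x a (C' ×ˢ OW)).toReal|) := by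
      refine ⟨2, ?_⟩
      rintro y ⟨C', rfl⟩
      refine Real.iSup_le (fun _ => ?_) (by norm_num)
      have h1 := htoReal01 x' b (C' ×ˢ OW)
      have h2' := htoReal01 x a (C' ×ˢ OW)
      rw [abs_le]
      constructor <;> linarith [h1.1, h1.2, h2'.1, h2'.2]
    have heq' : (⨆ _ : IsOpen (OY ∩ C.1),
        |(P x' b ((OY ∩ C.1) ×ˢ OW)).toReal - (P x a ((OY ∩ C.1) ×ˢ OW)).toReal|)
        = |(P x' b ((OY ∩ C.1) ×ˢ OW)).toReal - (P x a ((OY ∩ C.1) ×ˢ OW)).toReal| :=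
      ciSup_pos (hOYo.inter C.2)
    have hle : |(P x' b ((OY ∩ C.1) ×ˢ OW)).toReal - (P x a ((OY ∩ C.1) ×ˢ OW)).toReal|
        ≤ ⨆ (C' : Set Y) (_ : IsOpen C'),
            |(P x' b (C' ×ˢ OW)).toReal - (P x a (C' ×ˢ OW)).toReal| := by
      rw [← heq']
      exact le_ciSup hbdd (OY ∩ C.1)
    exact hle.trans hsup.le
  have hkey := unif_conv (X := Y × W) (A := A)
    (fun (C : {C : Set Y // IsOpen C}) (b : A) (x : Y × W) =>
      (P x b ((OY ∩ C.1) ×ˢ OW)).toReal)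
    hmeas' (fun C b x => (htoReal01 x b _).1) (fun C b x => (htoReal01 x b _).2)
    z a (ε / 7) h7 hEall
  filter_upwards [hkey] with q hq
  rw [Real.dist_eq, sub_zero]
  have h0le : (0:ℝ) ≤ ⨆ (C : Set Y) (_ : IsOpen C),
      |(∫⁻ x, P x q.2 ((OY ∩ C) ×ˢ OW) ∂(q.1 : Measure (Y × W))).toReal -
       (∫⁻ x, P x a ((OY ∩ C) ×ˢ OW) ∂(z : Measure (Y × W))).toReal| :=
    Real.iSup_nonneg fun C => Real.iSup_nonneg fun _ => abs_nonneg _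
  rw [abs_of_nonneg h0le]
  refine lt_of_le_of_lt ?_ (show 6 * (ε / 7) < ε by linarith)
  refine Real.iSup_le (fun C => Real.iSup_le (fun hC => ?_) (by positivity)) (by positivity)
  rw [hconv q.2 q.1 C hC, hconv a z C hC]
  exact hq ⟨C, hC⟩
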